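/- For every integer n ≥ 1, D_n = n · Der_{n−1}. -/

import Mathlib

open Equiv Finset

/-- The arrangement (one-line notation) of `σ` avoids all patterns
`12, 23, …, (n-1)n`: digit `i` (encoded as the value `i-1` in `Fin n`)
is never immediately followed by digit `i+1`. -/
def avoidsSucc (n : ℕ) (σ : Equiv.Perm (Fin n)) : Prop :=
  ∀ (k : ℕ) (h : k + 1 < n),
    (σ ⟨k + 1, h⟩).val ≠ (σ ⟨k, Nat.lt_of_succ_lt h⟩).val + 1

/-- The arrangement of `σ` contains the pattern `n1`: digit `n` (value `n-1`)
is immediately followed by digit `1` (value `0`). -/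
def containsN1 (n : ℕ) (σ : Equiv.Perm (Fin n)) : Prop :=
  ∃ (k : ℕ) (h : k + 1 < n),
    (σ ⟨k, Nat.lt_of_succ_lt h⟩).val = n - 1 ∧ (σ ⟨k + 1, h⟩).val = 0

/-- `dCount n` = number of arrangements of `{1,…,n}` avoiding `12, 23, …, (n-1)n`. -/
noncomputable def dCount (n : ℕ) : ℕ :=
  Nat.card {σ : Equiv.Perm (Fin n) // avoidsSucc n σ}

/-- `DCount n` = number of arrangements of `{1,…,n}` avoiding `12, 23, …, (n-1)n, n1`. -/
noncomputable def DCount (n : ℕ) : ℕ :=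
  Nat.card {σ : Equiv.Perm (Fin n) // avoidsSucc n σ ∧ ¬ containsN1 n σ}

def Pat (m : ℕ) (σ : Equiv.Perm (Fin (m + 1))) (i : Fin (m + 1)) : Prop :=
  ∃ (k : ℕ) (h : k + 1 < m + 1),
    σ ⟨k, Nat.lt_of_succ_lt h⟩ = i ∧ σ ⟨k + 1, h⟩ = i + 1

lemma fin_add_one_val {m : ℕ} (x : Fin (m+1)) :
    ((x + 1 : Fin (m+1)) : ℕ) = if (x : ℕ) = m then 0 else (x : ℕ) + 1 := by
  rw [Fin.val_add_one]
  congr 1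
  simp [Fin.ext_iff, Fin.val_last]

lemma avoids_iff_pat (m : ℕ) (σ : Equiv.Perm (Fin (m + 1))) :
    (avoidsSucc (m+1) σ ∧ ¬ containsN1 (m+1) σ) ↔ ∀ i, ¬ Pat m σ i := by
  constructor
  · rintro ⟨hA, hC⟩ i ⟨k, hk, h1, h2⟩
    subst h1
    have hv := fin_add_one_val (σ ⟨k, Nat.lt_of_succ_lt hk⟩)
    by_cases hm : ((σ ⟨k, Nat.lt_of_succ_lt hk⟩ : Fin (m+1)) : ℕ) = m
    · exact hC ⟨k, hk, by simpa using hm, by rw [h2, hv]; simp [hm]⟩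
    · exact hA k hk (by rw [h2, hv]; simp [hm])
  · intro hP
    constructor
    · intro k hk hval
      refine hP (σ ⟨k, Nat.lt_of_succ_lt hk⟩) ⟨k, hk, rfl, ?_⟩
      have h2 : ((σ ⟨k, Nat.lt_of_succ_lt hk⟩ : Fin (m+1)) : ℕ) ≠ m := by
        have := (σ ⟨k+1, hk⟩).isLt
        omega
      apply Fin.ext
      rw [fin_add_one_val, if_neg h2, hval]
    · rintro ⟨k, hk, hm, h0⟩
      refine hP (σ ⟨k, Nat.lt_of_succ_lt hk⟩) ⟨k, hk, rfl, ?_⟩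
      apply Fin.ext
      rw [fin_add_one_val, if_pos (by simpa using hm), h0]

lemma succAbove_val {N : ℕ} (p : Fin (N+1)) (x : Fin N) :
    ((p.succAbove x : Fin (N+1)) : ℕ) = if (x:ℕ) < (p:ℕ) then (x:ℕ) else (x:ℕ)+1 := by
  by_cases h : x.castSucc < p
  · rw [Fin.succAbove_of_castSucc_lt _ _ h, if_pos (by simpa [Fin.lt_def] using h)]
    simp
  · rw [Fin.succAbove_of_le_castSucc _ _ (not_lt.mp h), if_neg (by simpa [Fin.lt_def] using h)]
    simp

lemma succAbove_low_inj {N : ℕ} (v : Fin (N+1)) (y : Fin N) (j : Fin (N+1))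
    (hj : (j:ℕ) < (v:ℕ)) (h : v.succAbove y = j) : (y:ℕ) = (j:ℕ) := by
  have := succAbove_val v y
  rw [h] at this
  split at this <;> omega

section Insertion

variable {m : ℕ}

def vv (i : Fin (m+2)) : Fin (m+2) := i + 1

lemma vv_val (i : Fin (m+2)) (hi : (i:ℕ) < m+1) : ((vv i : Fin (m+2)) : ℕ) = (i:ℕ) + 1 := by
  have : i ≠ Fin.last (m+1) := by
    intro h; rw [h] at hi; simp [Fin.val_last] at hi
  rw [vv, Fin.val_add_one, if_neg this]

def ii (i : Fin (m+2)) (hi : (i:ℕ) < m+1) : Fin (m+1) := ⟨(i:ℕ), hi⟩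

def Psi (i : Fin (m+2)) (hi : (i:ℕ) < m+1) (σ' : Equiv.Perm (Fin (m+1))) : Equiv.Perm (Fin (m+2)) :=
  (finSuccEquiv' ((σ'.symm (ii i hi)).succ)).trans
    ((σ'.optionCongr).trans (finSuccEquiv' (vv i)).symm)

lemma Psi_p1 (i : Fin (m+2)) (hi : (i:ℕ) < m+1) (σ' : Equiv.Perm (Fin (m+1))) :
    Psi i hi σ' ((σ'.symm (ii i hi)).succ) = vv i := by
  simp [Psi]

lemma Psi_succAbove (i : Fin (m+2)) (hi : (i:ℕ) < m+1) (σ' : Equiv.Perm (Fin (m+1))) (x : Fin (m+1)) :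
    Psi i hi σ' (((σ'.symm (ii i hi)).succ).succAbove x) = (vv i).succAbove (σ' x) := by
  simp [Psi]

end Insertion

section Insertion2
variable {m : ℕ}

lemma pat_Psi_i (i : Fin (m+2)) (hi : (i:ℕ) < m+1) (σ' : Equiv.Perm (Fin (m+1))) :
    Pat (m+1) (Psi i hi σ') i := by
  set q' := σ'.symm (ii i hi) with hq'
  refine ⟨(q' : ℕ), by omega, ?_, ?_⟩
  · have hpos : (⟨(q':ℕ), by omega⟩ : Fin (m+2)) = (q'.succ).succAbove q' := by
      apply Fin.ext
      rw [succAbove_val, if_pos (by simp [Fin.val_succ])]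
    rw [hpos, Psi_succAbove, Equiv.apply_symm_apply]
    apply Fin.ext
    rw [succAbove_val]
    rw [if_pos (by rw [vv_val i hi]; exact Nat.lt_succ_of_le (le_refl _))]
    rfl
  · have hpos : (⟨(q':ℕ)+1, by omega⟩ : Fin (m+2)) = q'.succ := by
      apply Fin.ext; simp [Fin.val_succ]
    rw [hpos, Psi_p1]
    rfl

lemma pat_Psi (i : Fin (m+2)) (hi : (i:ℕ) < m+1) (σ' : Equiv.Perm (Fin (m+1)))
    (j' : Fin (m+1)) (hj : (j' : ℕ) < (i : ℕ)) (h : Pat m σ' j') :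
    Pat (m+1) (Psi i hi σ') j'.castSucc := by
  obtain ⟨k, hk, h1, h2⟩ := h
  set q' := σ'.symm (ii i hi) with hq'
  set x₁ : Fin (m+1) := ⟨k, Nat.lt_of_succ_lt hk⟩ with hx₁
  set x₂ : Fin (m+1) := ⟨k+1, hk⟩ with hx₂
  have hx₁q : x₁ ≠ q' := by
    intro hEq
    have : σ' x₁ = ii i hi := by rw [hEq, hq', Equiv.apply_symm_apply]
    rw [h1] at this
    have : (j' : ℕ) = (i : ℕ) := congrArg Fin.val this
    omega
  have hkK : k ≠ (q' : ℕ) := fun hc => hx₁q (Fin.ext hc)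
  have hj'1val : ((j' + 1 : Fin (m+1)) : ℕ) = (j' : ℕ) + 1 := by
    apply Fin.val_add_one_of_lt
    rw [Fin.lt_def, Fin.val_last]
    omega
  set a := ((q'.succ).succAbove x₁ : Fin (m+2)) with ha
  set b := ((q'.succ).succAbove x₂ : Fin (m+2)) with hb
  have hav : (a : ℕ) = if k < (q':ℕ)+1 then k else k+1 := by
    rw [ha, succAbove_val, Fin.val_succ]
  have hbv : (b : ℕ) = if k+1 < (q':ℕ)+1 then k+1 else k+2 := by
    rw [hb, succAbove_val, Fin.val_succ]
  have hba : (b : ℕ) = (a : ℕ) + 1 := by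
    rw [hav, hbv]; split <;> split <;> omega
  refine ⟨(a : ℕ), by omega, ?_, ?_⟩
  · have : (⟨(a:ℕ), by omega⟩ : Fin (m+2)) = a := Fin.ext rfl
    rw [this, ha, Psi_succAbove, h1]
    apply Fin.ext
    rw [succAbove_val, if_pos (by rw [vv_val i hi]; omega)]
    simp
  · have : (⟨(a:ℕ)+1, by omega⟩ : Fin (m+2)) = b := Fin.ext hba.symm
    rw [this, hb, Psi_succAbove, h2]
    apply Fin.ext
    rw [succAbove_val, if_pos (by rw [vv_val i hi, hj'1val]; omega)]
    rw [hj'1val]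
    have : ((j'.castSucc + 1 : Fin (m+2)) : ℕ) = (j' : ℕ) + 1 := by
      apply Fin.val_add_one_of_lt
      rw [Fin.lt_def, Fin.val_last, Fin.coe_castSucc]
      omega
    rw [this]

lemma pat_Psi_rev (i : Fin (m+2)) (hi : (i:ℕ) < m+1) (σ' : Equiv.Perm (Fin (m+1)))
    (j' : Fin (m+1)) (hj : (j' : ℕ) < (i : ℕ)) (h : Pat (m+1) (Psi i hi σ') j'.castSucc) :
    Pat m σ' j' := by
  obtain ⟨k, hk, h1, h2⟩ := h
  set q' := σ'.symm (ii i hi) with hq'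
  set p1 := q'.succ with hp1
  have hcv : ((j'.castSucc + 1 : Fin (m+2)) : ℕ) = (j' : ℕ) + 1 := by
    apply Fin.val_add_one_of_lt
    rw [Fin.lt_def, Fin.val_last, Fin.coe_castSucc]; omega
  have hy₁ : (⟨k, Nat.lt_of_succ_lt hk⟩ : Fin (m+2)) ≠ p1 := by
    intro hEq
    rw [hEq, Psi_p1] at h1
    have : ((i:ℕ)+1) = (j' : ℕ) := by
      rw [← vv_val i hi, h1]; simp
    omega
  have hy₂ : (⟨k+1, hk⟩ : Fin (m+2)) ≠ p1 := by
    intro hEq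
    rw [hEq, Psi_p1] at h2
    have : ((i:ℕ)+1) = (j' : ℕ) + 1 := by
      rw [← vv_val i hi, h2, hcv]
    omega
  obtain ⟨x₁, hx₁⟩ := Fin.exists_succAbove_eq hy₁
  obtain ⟨x₂, hx₂⟩ := Fin.exists_succAbove_eq hy₂
  rw [← hx₁, Psi_succAbove] at h1
  rw [← hx₂, Psi_succAbove] at h2
  have hv₁ : (σ' x₁ : ℕ) = (j' : ℕ) :=
    succAbove_low_inj _ _ _ (by rw [vv_val i hi, Fin.coe_castSucc]; omega) h1
  have hv₂ : (σ' x₂ : ℕ) = (j' : ℕ) + 1 := by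
    rw [← hcv]
    exact succAbove_low_inj _ _ _ (by rw [vv_val i hi, hcv]; omega) h2
  have hk1 := succAbove_val p1 x₁
  rw [hx₁] at hk1
  have hk2 := succAbove_val p1 x₂
  rw [hx₂] at hk2
  simp only [Fin.val_mk] at hk1 hk2
  have hx21 : (x₂ : ℕ) = (x₁ : ℕ) + 1 := by
    split at hk1 <;> split at hk2 <;> omega
  refine ⟨(x₁ : ℕ), by omega, ?_, ?_⟩
  · have hx : (⟨(x₁:ℕ), Nat.lt_of_succ_lt (by omega)⟩ : Fin (m+1)) = x₁ := Fin.ext rfl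
    rw [hx]
    exact Fin.ext hv₁
  · have hx : (⟨(x₁:ℕ)+1, by omega⟩ : Fin (m+1)) = x₂ := Fin.ext hx21.symm
    rw [hx]
    apply Fin.ext
    rw [hv₂]
    symm
    apply Fin.val_add_one_of_lt
    rw [Fin.lt_def, Fin.val_last]
    omega

end Insertion2

section Insertion3
variable {m : ℕ}

lemma Psi_inj (i : Fin (m+2)) (hi : (i:ℕ) < m+1) :
    Function.Injective (Psi i hi) := by
  intro σ₁ σ₂ h
  have hp1 : (σ₁.symm (ii i hi)).succ = (σ₂.symm (ii i hi)).succ := by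
    by_contra hne
    obtain ⟨x, hx⟩ := Fin.exists_succAbove_eq
      (show (σ₁.symm (ii i hi)).succ ≠ (σ₂.symm (ii i hi)).succ from hne)
    have h1 : Psi i hi σ₁ ((σ₁.symm (ii i hi)).succ) = vv i := Psi_p1 i hi σ₁
    rw [h] at h1
    rw [← hx, Psi_succAbove] at h1
    exact Fin.succAbove_ne _ _ h1
  apply Equiv.ext
  intro x
  have h1 := Psi_succAbove i hi σ₁ x
  have h2 := Psi_succAbove i hi σ₂ x
  rw [h, hp1, h2] at h1
  exact Fin.succAbove_right_injective h1.symm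

lemma Psi_surj (i : Fin (m+2)) (hi : (i:ℕ) < m+1) (σ : Equiv.Perm (Fin (m+2)))
    (hPat : Pat (m+1) σ i) : ∃ σ', Psi i hi σ' = σ := by
  obtain ⟨k, hk, h1, h2⟩ := hPat
  set p0 : Fin (m+2) := ⟨k+1, hk⟩ with hp0
  have hσp0 : σ p0 = vv i := h2
  set e : Option (Fin (m+1)) ≃ Option (Fin (m+1)) :=
    ((finSuccEquiv' p0).symm.trans σ).trans (finSuccEquiv' (vv i)) with he
  set σ' := e.removeNone with hσ'
  have key : ∀ x, (vv i).succAbove (σ' x) = σ (p0.succAbove x) := by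
    intro x
    have hne : σ (p0.succAbove x) ≠ vv i := by
      intro hEq
      rw [← hσp0] at hEq
      exact Fin.succAbove_ne _ _ (σ.injective hEq)
    have heq : e (some x) = finSuccEquiv' (vv i) (σ (p0.succAbove x)) := by
      simp [he]
    have hnn : finSuccEquiv' (vv i) (σ (p0.succAbove x)) ≠ none := by
      intro hc
      exact hne ((finSuccEquiv' (vv i)).injective (by rw [hc, finSuccEquiv'_at]))
    obtain ⟨y, hy⟩ := Option.ne_none_iff_exists'.mp hnn
    have hsome : ∃ y, e (some x) = some y := ⟨y, by rw [heq]; exact hy⟩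
    have hrs := Equiv.removeNone_some e hsome
    rw [heq] at hrs
    have h5 := congrArg (finSuccEquiv' (vv i)).symm hrs
    rw [Equiv.symm_apply_apply, finSuccEquiv'_symm_some] at h5
    exact h5
  have hkm : k < m + 1 := by omega
  set x₀ : Fin (m+1) := ⟨k, hkm⟩ with hx₀
  have hσ'x₀ : σ' x₀ = ii i hi := by
    have hpos : p0.succAbove x₀ = ⟨k, Nat.lt_of_succ_lt hk⟩ := by
      apply Fin.ext
      rw [succAbove_val, if_pos (by simp [hp0, hx₀])]
    have := key x₀
    rw [hpos, h1] at this
    apply Fin.ext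
    exact succAbove_low_inj _ _ _ (by rw [vv_val i hi]; omega) this
  have hq' : σ'.symm (ii i hi) = x₀ := by rw [← hσ'x₀, Equiv.symm_apply_apply]
  have hp1 : (σ'.symm (ii i hi)).succ = p0 := by
    rw [hq']
    apply Fin.ext
    simp [hp0, hx₀]
  refine ⟨σ', ?_⟩
  apply Equiv.ext
  intro y
  rcases eq_or_ne y p0 with rfl | hy
  · rw [← hp1, Psi_p1, hp1, hσp0]
  · obtain ⟨x, hx⟩ := Fin.exists_succAbove_eq hy
    rw [← hx, ← hp1, Psi_succAbove, hp1, key]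

end Insertion3

noncomputable def NS (m : ℕ) (S : Finset (Fin (m + 1))) : ℕ :=
  Nat.card {σ : Equiv.Perm (Fin (m + 1)) // ∀ j ∈ S, Pat m σ j}

lemma pat_inv {m : ℕ} {σ : Equiv.Perm (Fin (m+1))} {i : Fin (m+1)} (h : Pat m σ i) :
    (σ.symm (i + 1) : ℕ) = (σ.symm i : ℕ) + 1 := by
  obtain ⟨k, hk, h1, h2⟩ := h
  subst h1
  rw [← h2, Equiv.symm_apply_apply, Equiv.symm_apply_apply]

open scoped Fin.NatCast Fin.CommRing in
lemma NS_univ (m : ℕ) : NS m Finset.univ = 0 := by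
  rw [NS, Nat.card_eq_zero]
  left
  constructor
  rintro ⟨σ, hσ⟩
  have key : ∀ j : ℕ, j ≤ m + 1 → ((σ.symm ((j : Fin (m+1)))) : ℕ) = (σ.symm 0 : ℕ) + j := by
    intro j
    induction j with
    | zero => simp
    | succ j ih =>
      intro hj
      have hcast : ((j+1 : ℕ) : Fin (m+1)) = ((j : ℕ) : Fin (m+1)) + 1 := by
        push_cast; ring
      rw [hcast, pat_inv (hσ _ (Finset.mem_univ _)), ih (by omega)]
      omega
  have h1 := key (m+1) le_rfl
  have h2 : (((m+1 : ℕ)) : Fin (m+1)) = 0 := by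
    simp
  rw [h2] at h1
  omega

open scoped Fin.CommRing in
lemma pat_translate {m : ℕ} (σ : Equiv.Perm (Fin (m+1))) (t j : Fin (m+1)) :
    Pat m (σ.trans (Equiv.addRight t)) (j + t) ↔ Pat m σ j := by
  unfold Pat
  apply exists_congr; intro k; apply exists_congr; intro hk
  simp only [Equiv.trans_apply, Equiv.coe_addRight]
  constructor
  · rintro ⟨h1, h2⟩
    refine ⟨by exact add_right_cancel h1, ?_⟩
    have : j + t + 1 = (j + 1) + t := by ring
    rw [this] at h2
    exact add_right_cancel h2
  · rintro ⟨h1, h2⟩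
    subst h1; rw [h2]
    exact ⟨rfl, by ring⟩

lemma NS_translate (m : ℕ) (S : Finset (Fin (m+1))) (t : Fin (m+1)) :
    NS m (S.image (· + t)) = NS m S := by
  unfold NS
  apply Nat.card_congr
  apply Equiv.subtypeEquiv (Equiv.mulLeft (Equiv.addRight (-t) : Equiv.Perm (Fin (m+1))))
  intro σ
  have hform : (Equiv.mulLeft (Equiv.addRight (-t) : Equiv.Perm (Fin (m+1)))) σ
      = σ.trans (Equiv.addRight (-t)) := rfl
  have key : ∀ j : Fin (m+1), Pat m σ (j + t) ↔ Pat m (σ.trans (Equiv.addRight (-t))) j := by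
    intro j
    have h2 : (σ.trans (Equiv.addRight (-t))).trans (Equiv.addRight t) = σ := by
      ext x; simp
    conv_lhs => rw [← h2]
    exact pat_translate _ t j
  rw [hform]
  constructor
  · intro h j hj
    exact (key j).mp (h _ (Finset.mem_image_of_mem _ hj))
  · intro h j' hj'
    rw [Finset.mem_image] at hj'
    obtain ⟨j, hj, rfl⟩ := hj'
    exact (key j).mpr (h j hj)

lemma fin_lt_of_le_ne {N : ℕ} {j i : Fin N} (hle : j ≤ i) (hne : j ≠ i) : (j:ℕ) < (i:ℕ) := by
  rcases lt_or_eq_of_le hle with h | h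
  · exact h
  · exact absurd h hne

lemma card_step (m : ℕ) (S : Finset (Fin (m+2))) (i : Fin (m+2)) (hiS : i ∈ S)
    (hmax : ∀ j ∈ S, j ≤ i) (hsm : (i:ℕ) < m+1) :
    NS (m+1) S
      = NS m (Finset.univ.filter (fun j' : Fin (m+1) => j'.castSucc ∈ S.erase i)) := by
  show Nat.card {σ : Equiv.Perm (Fin (m+2)) // ∀ j ∈ S, Pat (m+1) σ j} = _
  classical
  set S' := Finset.univ.filter (fun j' : Fin (m+1) => j'.castSucc ∈ S.erase i) with hS'
  have hmem : ∀ j' : Fin (m+1), j' ∈ S' ↔ (j'.castSucc ∈ S ∧ j'.castSucc ≠ i) := by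
    intro j'
    simp [hS', Finset.mem_filter, Finset.mem_erase, and_comm]
  have forward : ∀ (σ' : Equiv.Perm (Fin (m+1))), (∀ j' ∈ S', Pat m σ' j') →
      ∀ j ∈ S, Pat (m+1) (Psi i hsm σ') j := by
    intro σ' h j hj
    rcases eq_or_ne j i with heq | hne
    · rw [heq]; exact pat_Psi_i i hsm σ'
    · have hlt : (j:ℕ) < (i:ℕ) := fin_lt_of_le_ne (hmax j hj) hne
      set j' : Fin (m+1) := ⟨(j:ℕ), by omega⟩ with hj'
      have hcast : j'.castSucc = j := Fin.ext rfl
      have hj'S : j' ∈ S' := (hmem j').mpr ⟨by rw [hcast]; exact hj, by rw [hcast]; exact hne⟩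
      have := pat_Psi i hsm σ' j' (by rw [hj']; exact hlt) (h j' hj'S)
      rwa [hcast] at this
  have backward : ∀ (σ' : Equiv.Perm (Fin (m+1))), (∀ j ∈ S, Pat (m+1) (Psi i hsm σ') j) →
      ∀ j' ∈ S', Pat m σ' j' := by
    intro σ' h j' hj'
    obtain ⟨hjS, hjne⟩ := (hmem j').mp hj'
    have hlt : (j':ℕ) < (i:ℕ) := by
      have := fin_lt_of_le_ne (hmax _ hjS) hjne
      simpa using this
    exact pat_Psi_rev i hsm σ' j' hlt (h _ hjS)
  rw [NS]
  apply Nat.card_congr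
  symm
  refine Equiv.ofBijective (fun x => ⟨Psi i hsm x.1, forward x.1 x.2⟩) ⟨?_, ?_⟩
  · rintro ⟨σ₁, h₁⟩ ⟨σ₂, h₂⟩ h
    exact Subtype.ext (Psi_inj i hsm (congrArg Subtype.val h))
  · rintro ⟨σ, hσ⟩
    obtain ⟨σ', hσ'⟩ := Psi_surj i hsm σ (hσ i hiS)
    refine ⟨⟨σ', backward σ' (by rw [hσ']; exact hσ)⟩, Subtype.ext hσ'⟩

lemma NS_small : ∀ (k m : ℕ) (S : Finset (Fin (m+1))), S.card = k →
    (∀ j ∈ S, (j : ℕ) + 1 < m + 1) →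
    NS m S = Nat.factorial (m + 1 - k) := by
  intro k
  induction k with
  | zero =>
    intro m S hcard _
    rw [Finset.card_eq_zero] at hcard
    subst hcard
    rw [NS]
    have : Nat.card {σ : Equiv.Perm (Fin (m+1)) // ∀ j ∈ (∅ : Finset (Fin (m+1))), Pat m σ j}
        = Nat.card (Equiv.Perm (Fin (m+1))) := by
      apply Nat.card_congr
      apply Equiv.subtypeUnivEquiv
      simp
    rw [this, Nat.card_eq_fintype_card, Fintype.card_perm, Fintype.card_fin]
    simp
  | succ k ih =>
    intro m S hcard hinv
    have hne : S.Nonempty := Finset.card_pos.mp (by omega)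
    set i := S.max' hne with hi
    have hiS : i ∈ S := S.max'_mem hne
    have hmax : ∀ j ∈ S, j ≤ i := fun j hj => S.le_max' j hj
    have him : (i:ℕ) < m := by have := hinv i hiS; omega
    rcases m with _ | m'
    · omega
    · rw [card_step m' S i hiS hmax (by omega)]
      set S' := Finset.univ.filter (fun j' : Fin (m'+1) => j'.castSucc ∈ S.erase i) with hS'
      have herase : S.erase i = S'.image Fin.castSucc := by
        ext j
        constructor
        · intro hj
          have hjS := Finset.mem_of_mem_erase hj
          have hjne := Finset.ne_of_mem_erase hj
          have hlt : (j:ℕ) < (i:ℕ) := fin_lt_of_le_ne (hmax j hjS) hjne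
          refine Finset.mem_image.mpr ⟨⟨(j:ℕ), by omega⟩, ?_, Fin.ext rfl⟩
          rw [hS', Finset.mem_filter]
          refine ⟨Finset.mem_univ _, ?_⟩
          have : (⟨(j:ℕ), by omega⟩ : Fin (m'+1)).castSucc = j := Fin.ext rfl
          rw [this]
          exact hj
        · intro hj
          obtain ⟨j', hj', rfl⟩ := Finset.mem_image.mp hj
          rw [hS', Finset.mem_filter] at hj'
          exact hj'.2
      have hcard' : S'.card = k := by
        have h1 : (S.erase i).card = k := by
          rw [Finset.card_erase_of_mem hiS, hcard]
          omega
        rw [herase, Finset.card_image_of_injective _ (Fin.castSucc_injective _)] at h1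
        exact h1
      have hinv' : ∀ j' ∈ S', (j' : ℕ) + 1 < m' + 1 := by
        intro j' hj'
        rw [hS', Finset.mem_filter] at hj'
        have h2 := hj'.2
        have hjS := Finset.mem_of_mem_erase h2
        have hjne := Finset.ne_of_mem_erase h2
        have := fin_lt_of_le_ne (hmax _ hjS) hjne
        simp only [Fin.coe_castSucc] at this
        omega
      rw [ih m' S' hcard' hinv']
      congr 1
      omega

open scoped Fin.CommRing in
lemma NS_ne_univ (m : ℕ) (S : Finset (Fin (m+1))) (hS : S ≠ Finset.univ) :
    NS m S = Nat.factorial (m + 1 - S.card) := by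
  classical
  have ⟨a, ha⟩ : ∃ a, a ∉ S := by
    by_contra hc
    push_neg at hc
    exact hS (Finset.eq_univ_iff_forall.mpr hc)
  set t : Fin (m+1) := Fin.last m - a with ht
  have hinj : Function.Injective (· + t) := fun x y h => by
    simpa using congrArg (· + (-t)) h
  have hlast : ∀ j ∈ S.image (· + t), ((j : ℕ)) + 1 < m + 1 := by
    intro j hj
    obtain ⟨b, hb, rfl⟩ := Finset.mem_image.mp hj
    have hne : b + t ≠ Fin.last m := by
      intro hc
      apply ha
      have hat : a + t = Fin.last m := by rw [ht]; ring
      have : b = a := hinj (hc.trans hat.symm)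
      rwa [← this]
    have : ((b + t : Fin (m+1)) : ℕ) ≠ m := fun hc => hne (Fin.ext (by simp [Fin.val_last, hc]))
    have := (b+t).isLt
    omega
  have hcard : (S.image (· + t)).card = S.card := Finset.card_image_of_injective _ hinj
  rw [← NS_translate m S t, NS_small (S.card) m (S.image (· + t)) hcard hlast]

noncomputable def cb (c : Prop) : ℤ := by
  classical exact if c then 1 else 0

lemma cb_pos {c : Prop} (h : c) : cb c = 1 := by simp [cb, h]

lemma cb_neg {c : Prop} (h : ¬ c) : cb c = 0 := by simp [cb, h]

lemma sieve (m : ℕ) :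
    (Nat.card {σ : Equiv.Perm (Fin (m+1)) // ∀ i, ¬ Pat m σ i} : ℤ)
      = ∑ S ∈ (Finset.univ : Finset (Fin (m+1))).powerset,
          (-1 : ℤ) ^ S.card * (NS m S : ℤ) := by
  classical
  have hcnt : ∀ (p : Equiv.Perm (Fin (m+1)) → Prop),
      (Nat.card {σ // p σ} : ℤ) = ∑ σ : Equiv.Perm (Fin (m+1)), cb (p σ) := by
    intro p
    rw [Nat.card_eq_fintype_card, Fintype.card_subtype, Finset.card_filter]
    push_cast
    apply Finset.sum_congr rfl
    intro σ _
    by_cases h : p σ <;> simp [h, cb_pos, cb_neg]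
  rw [hcnt]
  symm
  calc ∑ S ∈ (Finset.univ : Finset (Fin (m+1))).powerset, (-1:ℤ)^S.card * (NS m S : ℤ)
      = ∑ S ∈ (Finset.univ : Finset (Fin (m+1))).powerset,
          ∑ σ : Equiv.Perm (Fin (m+1)),
            (-1:ℤ)^S.card * cb (∀ j ∈ S, Pat m σ j) := by
        apply Finset.sum_congr rfl
        intro S _
        rw [NS]
        rw [hcnt (fun σ => ∀ j ∈ S, Pat m σ j), Finset.mul_sum]
    _ = ∑ σ : Equiv.Perm (Fin (m+1)),
          ∑ S ∈ (Finset.univ : Finset (Fin (m+1))).powerset,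
            (-1:ℤ)^S.card * cb (∀ j ∈ S, Pat m σ j) :=
        Finset.sum_comm
    _ = ∑ σ : Equiv.Perm (Fin (m+1)), cb (∀ i, ¬ Pat m σ i) := by
        apply Finset.sum_congr rfl
        intro σ _
        set T := Finset.univ.filter (fun i => Pat m σ i) with hT
        have hiff : ∀ S : Finset (Fin (m+1)), (∀ j ∈ S, Pat m σ j) ↔ S ⊆ T := by
          intro S
          constructor
          · intro h x hx
            rw [hT, Finset.mem_filter]
            exact ⟨Finset.mem_univ _, h x hx⟩
          · intro h x hx
            have := h hx
            rw [hT, Finset.mem_filter] at this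
            exact this.2
        calc ∑ S ∈ (Finset.univ : Finset (Fin (m+1))).powerset,
              (-1:ℤ)^S.card * cb (∀ j ∈ S, Pat m σ j)
            = ∑ S ∈ (Finset.univ : Finset (Fin (m+1))).powerset,
              (if S ⊆ T then ((-1:ℤ)^S.card) else 0) := by
              apply Finset.sum_congr rfl
              intro S _
              by_cases h : S ⊆ T
              · rw [cb_pos ((hiff S).mpr h), if_pos h, mul_one]
              · rw [cb_neg (fun hc => h ((hiff S).mp hc)), if_neg h, mul_zero]
          _ = ∑ S ∈ ((Finset.univ : Finset (Fin (m+1))).powerset).filter (· ⊆ T),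
                (-1:ℤ)^S.card := by
              rw [Finset.sum_filter]
          _ = ∑ S ∈ T.powerset, (-1:ℤ)^S.card := by
              congr 1
              ext S
              simp [Finset.mem_powerset, Finset.mem_filter, Finset.subset_univ]
          _ = if T = ∅ then 1 else 0 := Finset.sum_powerset_neg_one_pow_card
          _ = cb (∀ i, ¬ Pat m σ i) := by
              by_cases h : T = ∅
              · rw [if_pos h, cb_pos]
                rw [hT, Finset.filter_eq_empty_iff] at h
                intro i
                exact h (Finset.mem_univ i)
              · rw [if_neg h, eq_comm]
                apply cb_neg
                intro hall
                apply h
                rw [hT, Finset.filter_eq_empty_iff]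
                intro i _
                exact hall i

lemma choose_factorial_eq_asc (N j : ℕ) (hj : j ≤ N) :
    N.choose j * Nat.factorial (N - j) = Nat.ascFactorial (j+1) (N - j) := by
  apply Nat.eq_of_mul_eq_mul_left (Nat.factorial_pos j)
  have h1 : j.factorial * (N.choose j * (N - j).factorial)
      = N.choose j * j.factorial * (N - j).factorial := by ring
  rw [h1, Nat.choose_mul_factorial_mul_factorial hj]
  rw [Nat.factorial_mul_ascFactorial j (N - j)]
  congr 1
  omega

theorem stmt_6 (n : ℕ) (hn : 1 ≤ n) :
    DCount n = n * numDerangements (n - 1) := by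
  obtain ⟨m, rfl⟩ : ∃ m, n = m + 1 := ⟨n - 1, by omega⟩
  simp only [Nat.add_sub_cancel]
  have h0 : DCount (m+1) = Nat.card {σ : Equiv.Perm (Fin (m+1)) // ∀ i, ¬ Pat m σ i} :=
    Nat.card_congr (Equiv.subtypeEquivRight (fun σ => avoids_iff_pat m σ))
  have hz : (DCount (m+1) : ℤ) = (m+1 : ℕ) * (numDerangements m : ℤ) := by
    rw [h0, sieve m]
    have hsplit := Finset.sum_erase_add ((Finset.univ : Finset (Fin (m+1))).powerset)
      (fun S => (-1:ℤ)^S.card * (NS m S : ℤ)) (Finset.mem_powerset_self _)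
    have huniv : (-1:ℤ)^(Finset.univ : Finset (Fin (m+1))).card
        * (NS m Finset.univ : ℤ) = 0 := by
      rw [NS_univ]; simp
    have hsplit2 := Finset.sum_erase_add ((Finset.univ : Finset (Fin (m+1))).powerset)
      (fun S => (-1:ℤ)^S.card * ((Nat.factorial (m + 1 - S.card) : ℕ) : ℤ))
      (Finset.mem_powerset_self _)
    have hcongr : ∑ S ∈ ((Finset.univ : Finset (Fin (m+1))).powerset).erase Finset.univ,
          (-1:ℤ)^S.card * (NS m S : ℤ)
        = ∑ S ∈ ((Finset.univ : Finset (Fin (m+1))).powerset).erase Finset.univ,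
          (-1:ℤ)^S.card * ((Nat.factorial (m + 1 - S.card) : ℕ) : ℤ) := by
      apply Finset.sum_congr rfl
      intro S hS
      rw [NS_ne_univ m S (Finset.ne_of_mem_erase hS)]
    have hcu : (Finset.univ : Finset (Fin (m+1))).card = m + 1 := by
      rw [Finset.card_univ, Fintype.card_fin]
    have hgsum : ∑ S ∈ (Finset.univ : Finset (Fin (m+1))).powerset,
          (-1:ℤ)^S.card * ((Nat.factorial (m + 1 - S.card) : ℕ) : ℤ)
        = (numDerangements (m+1) : ℤ) := by
      rw [Finset.sum_powerset_apply_card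
        (fun j => (-1:ℤ)^j * ((Nat.factorial (m + 1 - j) : ℕ) : ℤ)), hcu]
      rw [numDerangements_sum (m+1)]
      apply Finset.sum_congr rfl
      intro j hj
      have hjle : j ≤ m + 1 := by
        rw [Finset.mem_range] at hj; omega
      rw [← choose_factorial_eq_asc (m+1) j hjle]
      push_cast
      ring
    have e1 : ∑ S ∈ (Finset.univ : Finset (Fin (m+1))).powerset,
          (-1:ℤ)^S.card * (NS m S : ℤ)
        = (numDerangements (m+1) : ℤ) - (-1:ℤ)^(m+1) := by
      calc ∑ S ∈ (Finset.univ : Finset (Fin (m+1))).powerset,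
            (-1:ℤ)^S.card * (NS m S : ℤ)
          = ∑ S ∈ ((Finset.univ : Finset (Fin (m+1))).powerset).erase Finset.univ,
            (-1:ℤ)^S.card * (NS m S : ℤ) :=
              (Finset.sum_erase (f := fun S : Finset (Fin (m+1)) => (-1:ℤ)^S.card * (NS m S : ℤ))
                (a := Finset.univ) _ huniv).symm
        _ = ∑ S ∈ ((Finset.univ : Finset (Fin (m+1))).powerset).erase Finset.univ,
            (-1:ℤ)^S.card * ((Nat.factorial (m + 1 - S.card) : ℕ) : ℤ) := hcongr
        _ = (∑ S ∈ (Finset.univ : Finset (Fin (m+1))).powerset,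
              (-1:ℤ)^S.card * ((Nat.factorial (m + 1 - S.card) : ℕ) : ℤ))
            - (-1:ℤ)^(Finset.univ : Finset (Fin (m+1))).card
              * ((Nat.factorial (m + 1 - (Finset.univ : Finset (Fin (m+1))).card) : ℕ) : ℤ) :=
            eq_sub_of_add_eq hsplit2
        _ = (numDerangements (m+1) : ℤ) - (-1:ℤ)^(m+1) := by
            rw [hgsum, hcu]
            norm_num
    rw [e1, numDerangements_succ m]
    rw [pow_succ]
    push_cast
    ring
  exact_mod_cast hz
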